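/- Let X_1, …, X_{d²−1} be a basis of su(d) and V(θ, φ) = exp(X(θ)) exp(X(φ)). If φ_s is a singular point of the map φ ↦ exp(X(φ)), then (φ_s, φ_s) is a singular point of V: the pulled-back partial derivatives of V at (φ_s, φ_s) do not span su(d). -/

import Mathlib

open Matrix
open scoped Matrix.Norms.L2Operator

theorem product_of_two_exponentials_inherits_singular_point
    {d : ℕ} (X : Fin (d ^ 2 - 1) → Matrix (Fin d) (Fin d) ℂ)
    (hskew : ∀ j, (X j)ᴴ = -(X j)) (htr : ∀ j, (X j).trace = 0)
    (hli : LinearIndependent ℝ X)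
    (hspan : ∀ A : Matrix (Fin d) (Fin d) ℂ, Aᴴ = -A → A.trace = 0 →
      A ∈ Submodule.span ℝ (Set.range X))
    (φs : Fin (d ^ 2 - 1) → ℝ)
    (hsing : ∃ A : Matrix (Fin d) (Fin d) ℂ, Aᴴ = -A ∧ A.trace = 0 ∧
      A ∉ Submodule.span ℝ (Set.range fun j : Fin (d ^ 2 - 1) =>
        NormedSpace.exp (-(∑ i, φs i • X i)) *
          fderiv ℝ (fun φ : Fin (d ^ 2 - 1) → ℝ => NormedSpace.exp (∑ i, φ i • X i)) φs
            (Pi.single j 1))) :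
    ∃ A : Matrix (Fin d) (Fin d) ℂ, Aᴴ = -A ∧ A.trace = 0 ∧
      A ∉ Submodule.span ℝ (Set.range fun jk : Fin (d ^ 2 - 1) ⊕ Fin (d ^ 2 - 1) =>
        NormedSpace.exp (-(∑ i, φs i • X i)) * NormedSpace.exp (-(∑ i, φs i • X i)) *
          fderiv ℝ
            (fun p : (Fin (d ^ 2 - 1) → ℝ) × (Fin (d ^ 2 - 1) → ℝ) =>
              NormedSpace.exp (∑ i, p.1 i • X i) * NormedSpace.exp (∑ i, p.2 i • X i))
            (φs, φs)
            (Sum.elim (fun j => ((Pi.single j 1 : Fin (d ^ 2 - 1) → ℝ), 0))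
              (fun j => (0, (Pi.single j 1 : Fin (d ^ 2 - 1) → ℝ))) jk)) := by
  classical
  obtain ⟨A, hA1, hA2, hA3⟩ := hsing
  refine ⟨A, hA1, hA2, fun hmem => hA3 ?_⟩
  set g : (Fin (d ^ 2 - 1) → ℝ) → Matrix (Fin d) (Fin d) ℂ :=
    fun φ => NormedSpace.exp (∑ i, φ i • X i) with hgdef
  set P : (Fin (d ^ 2 - 1) → ℝ) × (Fin (d ^ 2 - 1) → ℝ) → Matrix (Fin d) (Fin d) ℂ :=
    fun p => NormedSpace.exp (∑ i, p.1 i • X i) * NormedSpace.exp (∑ i, p.2 i • X i)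
    with hPdef
  set S : Matrix (Fin d) (Fin d) ℂ := ∑ i, φs i • X i with hSdef
  set E : Matrix (Fin d) (Fin d) ℂ := NormedSpace.exp S with hEdef
  set F : Matrix (Fin d) (Fin d) ℂ := NormedSpace.exp (-S) with hFdef
  -- basic algebra
  have hFE : F * E = 1 := by
    rw [hEdef, hFdef, ← Matrix.exp_add_of_commute _ _ ((Commute.refl S).neg_left),
      neg_add_cancel, NormedSpace.exp_zero]
  have hEF : E * F = 1 := by
    rw [hEdef, hFdef, ← Matrix.exp_add_of_commute _ _ ((Commute.refl S).neg_right),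
      add_neg_cancel, NormedSpace.exp_zero]
  have hSskew : Sᴴ = -S := by
    rw [hSdef]
    simp only [Matrix.conjTranspose_sum, Matrix.conjTranspose_smul, hskew, star_trivial,
      smul_neg, ← Finset.sum_neg_distrib]
  have hFt : Fᴴ = E := by
    rw [hFdef, ← Matrix.exp_conjTranspose, conjTranspose_neg, hSskew, neg_neg, hEdef]
  have hEt : Eᴴ = F := by
    rw [hEdef, ← Matrix.exp_conjTranspose, hSskew, hFdef]
  -- the linear map T
  set T : (Fin (d ^ 2 - 1) → ℝ) →L[ℝ] Matrix (Fin d) (Fin d) ℂ :=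
    ∑ i, (ContinuousLinearMap.proj i).smulRight (X i) with hTdef
  have hT : ∀ φ, T φ = ∑ i, φ i • X i := by
    intro φ
    simp [hTdef, ContinuousLinearMap.sum_apply]
  -- differentiability of g
  have hgeq : g = fun φ => NormedSpace.exp (T φ) := by
    funext φ; rw [hgdef, hT]
  have hgdiff : ∀ ψ : Fin (d ^ 2 - 1) → ℝ, DifferentiableAt ℝ g ψ := by
    intro ψ
    rw [hgeq]
    exact (((NormedSpace.exp_analytic (𝕂 := ℂ) (T ψ)).differentiableAt).restrictScalars ℝ).comp ψ
      (T.differentiableAt)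
  set Dg : (Fin (d ^ 2 - 1) → ℝ) →L[ℝ] Matrix (Fin d) (Fin d) ℂ := fderiv ℝ g φs with hDgdef
  have hg : HasFDerivAt g Dg φs := (hgdiff φs).hasFDerivAt
  have hgφs : g φs = E := rfl
  -- derivative of the product map
  have h1 : HasFDerivAt (fun p : (Fin (d ^ 2 - 1) → ℝ) × (Fin (d ^ 2 - 1) → ℝ) => g p.1)
      (Dg.comp (ContinuousLinearMap.fst ℝ _ _)) (φs, φs) :=
    HasFDerivAt.comp (g := g) (f := fun p : (Fin (d ^ 2 - 1) → ℝ) × (Fin (d ^ 2 - 1) → ℝ) => p.1) _ hg hasFDerivAt_fst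
  have h2 : HasFDerivAt (fun p : (Fin (d ^ 2 - 1) → ℝ) × (Fin (d ^ 2 - 1) → ℝ) => g p.2)
      (Dg.comp (ContinuousLinearMap.snd ℝ _ _)) (φs, φs) :=
    HasFDerivAt.comp (g := g) (f := fun p : (Fin (d ^ 2 - 1) → ℝ) × (Fin (d ^ 2 - 1) → ℝ) => p.2) _ hg hasFDerivAt_snd
  have hP : HasFDerivAt P
      (E • (Dg.comp (ContinuousLinearMap.snd ℝ _ _)) +
        (Dg.comp (ContinuousLinearMap.fst ℝ _ _)).smulRight E) (φs, φs) := by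
    have := h1.mul' h2
    refine this.congr_fderiv (ContinuousLinearMap.ext fun v => ?_)
    simp [hgφs]
  have hDP : fderiv ℝ P (φs, φs) =
      E • (Dg.comp (ContinuousLinearMap.snd ℝ _ _)) +
        (Dg.comp (ContinuousLinearMap.fst ℝ _ _)).smulRight E := hP.fderiv
  -- conjugated basis elements stay in su(d)
  have hc : ∀ i, F * X i * E ∈ Submodule.span ℝ (Set.range X) := by
    intro i
    refine hspan _ ?_ ?_
    · rw [conjTranspose_mul, conjTranspose_mul, hskew, hFt, hEt]
      simp [mul_assoc]
    · rw [Matrix.trace_mul_cycle, hEF, one_mul, htr]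
  -- basis of the span
  set b : Module.Basis (Fin (d ^ 2 - 1)) ℝ (Submodule.span ℝ (Set.range X)) := Module.Basis.span hli
    with hbdef
  have hb : ∀ w : Submodule.span ℝ (Set.range X),
      ∑ k, b.repr w k • X k = (w : Matrix (Fin d) (Fin d) ℂ) := by
    intro w
    conv_rhs => rw [← b.sum_repr w]
    push_cast
    refine Finset.sum_congr rfl fun k _ => ?_
    rw [hbdef, Module.Basis.span_apply]
  -- the linear map C
  set r : Fin (d ^ 2 - 1) → Fin (d ^ 2 - 1) → ℝ :=
    fun i k => b.repr ⟨F * X i * E, hc i⟩ k with hrdef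
  have hrep : ∀ i, ∑ k, r i k • X k = F * X i * E := fun i => hb ⟨F * X i * E, hc i⟩
  set C : (Fin (d ^ 2 - 1) → ℝ) →L[ℝ] (Fin (d ^ 2 - 1) → ℝ) :=
    LinearMap.toContinuousLinearMap
      { toFun := fun v k => ∑ i, v i * r i k
        map_add' := by
          intro v w; funext k; simp [add_mul, Finset.sum_add_distrib]
        map_smul' := by
          intro c v; funext k; simp [Finset.mul_sum, mul_assoc] } with hCdef
  have hCapp : ∀ v, C v = fun k => ∑ i, v i * r i k := fun v => rfl
  have hTC : ∀ v, T (C v) = F * T v * E := by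
    intro v
    rw [hT, hT, hCapp]
    calc ∑ k, (∑ i, v i * r i k) • X k
        = ∑ k, ∑ i, v i • r i k • X k := by
          refine Finset.sum_congr rfl fun k _ => ?_
          rw [Finset.sum_smul]
          exact Finset.sum_congr rfl fun i _ => (smul_smul (v i) (r i k) (X k)).symm
      _ = ∑ i, v i • ∑ k, r i k • X k := by
          rw [Finset.sum_comm]; simp [Finset.smul_sum]
      _ = ∑ i, v i • (F * X i * E) := by simp [hrep]
      _ = F * (∑ i, v i • X i) * E := by
          rw [Matrix.mul_sum, Matrix.sum_mul]
          refine Finset.sum_congr rfl fun i _ => ?_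
          rw [mul_smul_comm, smul_mul_assoc]
  -- C fixes φs
  have hCφs : C φs = φs := by
    have hSE : S * E = E * S := ((Commute.refl S).exp_right).eq
    have h1 : T (C φs) = T φs := by
      rw [hTC, hT, ← hSdef, mul_assoc, hSE, ← mul_assoc, hFE, one_mul]
    have h0 : ∑ i, (C φs i - φs i) • X i = 0 := by
      simp only [sub_smul, Finset.sum_sub_distrib]
      rw [← hT, ← hT, h1, sub_self]
    have := Fintype.linearIndependent_iff.mp hli _ h0
    funext i
    have hi := this i
    linarith
  -- conjugation identity for the derivative
  have hconj : ∀ v, Dg (C v) = F * Dg v * E := by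
    have V : (Matrix (Fin d) (Fin d) ℂ)ˣ := ⟨F, E, hFE, hEF⟩
    have hfun : g ∘ ⇑C = fun φ => F * g φ * E := by
      funext φ
      show NormedSpace.exp (∑ i, (C φ) i • X i)
          = F * NormedSpace.exp (∑ i, φ i • X i) * E
      rw [← hT, ← hT, hTC]
      exact Matrix.exp_units_conj ⟨F, E, hFE, hEF⟩ (T φ)
    have hgC : HasFDerivAt (g ∘ ⇑C) (Dg.comp C) φs :=
      HasFDerivAt.comp φs (hCφs.symm ▸ hg) C.hasFDerivAt
    have h2' : HasFDerivAt (fun φ => F * g φ * E) (((F • Dg).smulRight E)) φs := by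
      have := (hg.const_mul F).mul_const' E
      refine this.congr_fderiv (ContinuousLinearMap.ext fun v => ?_)
      simp
    have hgC' : HasFDerivAt (fun φ => F * g φ * E) (Dg.comp C) φs := hfun ▸ hgC
    have heq : Dg.comp C = (F • Dg).smulRight E := hgC'.unique h2'
    intro v
    have := ContinuousLinearMap.ext_iff.mp heq v
    simpa [smul_eq_mul, mul_assoc] using this
  -- span inclusion
  refine Submodule.span_le.mpr ?_ hmem
  rintro _ ⟨jk, rfl⟩
  rw [hDP]
  cases jk with
  | inl j =>
      simp only [Sum.elim_inl, ContinuousLinearMap.add_apply, ContinuousLinearMap.smul_apply,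
        ContinuousLinearMap.coe_comp', Function.comp_apply, ContinuousLinearMap.coe_fst',
        ContinuousLinearMap.coe_snd', ContinuousLinearMap.smulRight_apply, map_zero,
        smul_zero, zero_add, add_zero, smul_eq_mul, mul_zero]
      have key : F * F * (Dg (Pi.single j 1) * E) = F * Dg (C (Pi.single j 1)) := by
        rw [hconj]; noncomm_ring
      rw [key]
      have hexpand : C (Pi.single j 1) = ∑ k, C (Pi.single j 1) k • (Pi.single k 1 : Fin (d ^ 2 - 1) → ℝ) := by
        funext m
        simp [Finset.sum_apply, Pi.single_apply, Finset.sum_ite_eq', mul_comm]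
      rw [hexpand, map_sum, Finset.mul_sum]
      refine Submodule.sum_mem _ fun k _ => ?_
      rw [_root_.map_smul, mul_smul_comm]
      exact Submodule.smul_mem _ _ (Submodule.subset_span ⟨k, rfl⟩)
  | inr j =>
      simp only [Sum.elim_inr, ContinuousLinearMap.add_apply, ContinuousLinearMap.smul_apply,
        ContinuousLinearMap.coe_comp', Function.comp_apply, ContinuousLinearMap.coe_fst',
        ContinuousLinearMap.coe_snd', ContinuousLinearMap.smulRight_apply, map_zero,
        smul_zero, zero_add, add_zero, smul_eq_mul, mul_zero, zero_mul]
      have key : F * F * (E * Dg (Pi.single j 1)) = F * Dg (Pi.single j 1) := by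
        rw [mul_assoc, ← mul_assoc F E, hFE, one_mul]
      rw [key]
      exact Submodule.subset_span ⟨j, rfl⟩
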